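/- Let X be a finite set, and let S be a nilpotent subsemigroup of T(X) with zero element e, i.e., there is m ∈ ℕ such that every product of m elements of S equals e. Then for every x in the image of e, every y in the fiber e⁻¹(x) with y ≠ x, and every β ∈ S, we have yβ ∈ e⁻¹(x) and yβ ≠ y. -/

import Mathlib

/-- `S` is a subsemigroup of the full transformation semigroup on `X`
(maps act on the right, so the product `β·γ` is `γ ∘ β`). -/
def IsTransSub {X : Type*} (S : Set (X → X)) : Prop :=
  ∀ β ∈ S, ∀ γ ∈ S, (γ ∘ β) ∈ S

/-- `e` is a zero element of `S`: `βe = eβ = e` for all `β ∈ S`. -/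
def IsZeroElem {X : Type*} (S : Set (X → X)) (e : X → X) : Prop :=
  e ∈ S ∧ ∀ β ∈ S, e ∘ β = e ∧ β ∘ e = e

/-- `S` is nilpotent with zero `e`: some `m ≥ 1` such that every product of
`m` elements of `S` equals `e`. -/
def IsNilpotentSub {X : Type*} (S : Set (X → X)) (e : X → X) : Prop :=
  ∃ m : ℕ, 0 < m ∧ ∀ L : List (X → X), L.length = m → (∀ f ∈ L, f ∈ S) →
    L.foldr (· ∘ ·) id = e

/-- `S` is commutative. -/
def IsCommSub {X : Type*} (S : Set (X → X)) : Prop :=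
  ∀ β ∈ S, ∀ γ ∈ S, β ∘ γ = γ ∘ β

/-- `S` is a null semigroup with zero `e`: every product of two elements is `e`. -/
def IsNullSub {X : Type*} (S : Set (X → X)) (e : X → X) : Prop :=
  ∀ β ∈ S, ∀ γ ∈ S, γ ∘ β = e

/-- `ξ(n) = max { t ^ (n - t) : 1 ≤ t ≤ n }`. -/
def xi (n : ℕ) : ℕ := (Finset.Icc 1 n).sup (fun t => t ^ (n - t))

/-- `α(n) = max { t ∈ {1,…,n} : t ^ (n - t) = ξ(n) }`. -/
def alphaMax (n : ℕ) : ℕ :=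
  ((Finset.Icc 1 n).filter (fun t => t ^ (n - t) = xi n)).sup id

theorem stmt4 {X : Type*} [Fintype X]
    (S : Set (X → X)) (hS : IsTransSub S)
    (e : X → X) (he : IsZeroElem S e) (hnil : IsNilpotentSub S e) :
    ∀ x ∈ Set.range e, ∀ y : X, e y = x → y ≠ x →
      ∀ β ∈ S, e (β y) = x ∧ β y ≠ y := by
  rintro x hx y hey hyx β hβ
  have h1 : e (β y) = x := by
    have := (he.2 β hβ).1
    calc e (β y) = (e ∘ β) y := rfl
    _ = e y := by rw [this]
    _ = x := hey
  refine ⟨h1, fun hfix => ?_⟩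
  obtain ⟨m, hm, hL⟩ := hnil
  have hfold : (List.replicate m β).foldr (· ∘ ·) id = e :=
    hL _ List.length_replicate (fun f hf => by
      rw [List.eq_of_mem_replicate hf]; exact hβ)
  have hiter : ∀ k : ℕ, ((List.replicate k β).foldr (· ∘ ·) id) y = y := by
    intro k
    induction k with
    | zero => rfl
    | succ n ih =>
      simp only [List.replicate_succ, List.foldr_cons, Function.comp_apply, ih, hfix]
  have := hiter m
  rw [hfold] at this
  exact hyx (this ▸ hey)
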